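/- Let n ≥ 2, p ∈ {2,...,n}, and μ ∈ Γ_p with μ_1 ≤ μ_2 ≤ ... ≤ μ_n. Then μ_1 > -((n-p)/(p(n-1))) Σ_{j=2}^n μ_j, and in particular μ_1 > -((n-p)/p) μ_n. -/

import Mathlib

set_option linter.unusedSectionVars false
open Finset in
noncomputable def Es {ι : Type*} (x : ι → ℝ) (s : Finset ι) (k : ℕ) : ℝ :=
  ∑ t ∈ s.powersetCard k, ∏ i ∈ t, x i

section basic
open Finset
variable {ι : Type*} [DecidableEq ι] (x : ι → ℝ)

@[simp] lemma Es_zero (s : Finset ι) : Es x s 0 = 1 := by simp [Es]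

lemma Es_of_card_lt {s : Finset ι} {k : ℕ} (h : s.card < k) : Es x s k = 0 := by
  rw [Es, Finset.powersetCard_eq_empty.2 h, Finset.sum_empty]

lemma Es_insert {a : ι} {s : Finset ι} (ha : a ∉ s) (k : ℕ) :
    Es x (insert a s) (k + 1) = Es x s (k + 1) + x a * Es x s k := by
  rw [Es, Finset.powersetCard_succ_insert ha, Finset.sum_union, Finset.sum_image]
  · rw [Es, Es, Finset.mul_sum]
    congr 1
    refine Finset.sum_congr rfl fun t ht => ?_
    rw [Finset.mem_powersetCard] at ht
    rw [Finset.prod_insert (fun hat => ha (ht.1 hat))]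
  · intro t ht u hu htu
    rw [Finset.mem_coe, Finset.mem_powersetCard] at ht hu
    have key : ∀ v : Finset ι, v ⊆ s → (insert a v).erase a = v := fun v hv => by
      rw [Finset.erase_insert (fun hav => ha (hv hav))]
    rw [← key t ht.1, ← key u hu.1, htu]
  · rw [Finset.disjoint_left]
    intro t ht hti
    rw [Finset.mem_powersetCard] at ht
    rw [Finset.mem_image] at hti
    obtain ⟨u, hu, rfl⟩ := hti
    exact ha (ht.1 (Finset.mem_insert_self a u))

lemma Es_one (s : Finset ι) : Es x s 1 = ∑ i ∈ s, x i := by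
  induction s using Finset.induction with
  | empty => rw [Finset.sum_empty]; exact Es_of_card_lt x (by simp)
  | insert _ _ ha ih => rw [Es_insert x ha, ih, Es_zero, Finset.sum_insert ha]; ring

lemma Es_card (s : Finset ι) : Es x s s.card = ∏ i ∈ s, x i := by
  simp [Es, Finset.powersetCard_self]

lemma Es_pos {s : Finset ι} (hx : ∀ i ∈ s, 0 < x i) {k : ℕ} (hk : k ≤ s.card) :
    0 < Es x s k := by
  refine Finset.sum_pos (fun t ht => ?_) (Finset.powersetCard_nonempty.2 hk)
  rw [Finset.mem_powersetCard] at ht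
  exact Finset.prod_pos fun i hi => hx i (ht.1 hi)

lemma Es_card_sub_one {s : Finset ι} (hs : s.Nonempty) :
    Es x s (s.card - 1) = ∑ i ∈ s, ∏ j ∈ s.erase i, x j := by
  induction hs using Finset.Nonempty.cons_induction with
  | singleton a => simp [Es]
  | cons a s ha hs ih =>
    rw [Finset.cons_eq_insert, Finset.card_insert_of_notMem ha]
    obtain ⟨m, hm⟩ : ∃ m, s.card = m + 1 := ⟨s.card - 1, (Nat.succ_pred_eq_of_pos hs.card_pos).symm⟩
    have h2 : Es x s m = ∑ i ∈ s, ∏ j ∈ s.erase i, x j := by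
      rw [← ih]; congr 1; omega
    rw [Nat.add_sub_cancel, hm, Es_insert x ha, ← hm, Es_card, h2,
      Finset.sum_insert ha, Finset.erase_insert ha, Finset.mul_sum]
    congr 1
    refine Finset.sum_congr rfl fun i hi => ?_
    have hia : i ≠ a := fun h => ha (h ▸ hi)
    rw [Finset.erase_insert_of_ne hia.symm,
      Finset.prod_insert (fun h => ha (Finset.erase_subset _ _ h))]

lemma powersetCard_erase {s : Finset ι} (i : ι) (k : ℕ) :
    (s.erase i).powersetCard k = (s.powersetCard k).filter (fun t => i ∉ t) := by
  ext t
  simp only [Finset.mem_powersetCard, Finset.mem_filter, Finset.subset_erase]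
  tauto

lemma Es_avg (s : Finset ι) (k : ℕ) :
    ∑ i ∈ s, Es x (s.erase i) k = ((s.card - k : ℕ) : ℝ) * Es x s k := by
  have key : ∀ i, Es x (s.erase i) k = ∑ t ∈ s.powersetCard k, if i ∉ t then ∏ j ∈ t, x j else 0 :=
    fun i => by rw [Es, powersetCard_erase, Finset.sum_filter]
  simp_rw [key]
  rw [Finset.sum_comm, Es, Finset.mul_sum]
  refine Finset.sum_congr rfl fun t ht => ?_
  rw [Finset.mem_powersetCard] at ht
  rw [Finset.sum_ite, Finset.sum_const, Finset.sum_const_zero, add_zero, nsmul_eq_mul]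
  congr 2
  have : Finset.filter (fun i => i ∉ t) s = s \ t := by
    ext j; simp [Finset.mem_sdiff]
  rw [this, Finset.card_sdiff_of_subset ht.1, ht.2]

lemma Es_newton_top {s : Finset ι} (hM : 2 ≤ s.card) :
    2 * (s.card : ℝ) * (Es x s s.card * Es x s (s.card - 2)) ≤
      ((s.card : ℝ) - 1) * (Es x s (s.card - 1))^2 := by
  set M := s.card with hMdef
  set P : ι → ℝ := fun i => ∏ j ∈ s.erase i, x j with hP
  have hne : s.Nonempty := Finset.card_pos.1 (by omega)
  have h1 : Es x s (M - 1) = ∑ i ∈ s, P i := Es_card_sub_one x hne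
  have h2 : ∑ i ∈ s, Es x (s.erase i) (M - 2) = 2 * Es x s (M - 2) := by
    rw [Es_avg x s (M - 2)]
    congr 1
    have : M - (M - 2) = 2 := by omega
    rw [this]; norm_num
  have h3 : ∀ i ∈ s, Es x (s.erase i) (M - 2) = ∑ j ∈ s.erase i, ∏ l ∈ (s.erase i).erase j, x l := by
    intro i hi
    have hc : (s.erase i).card = M - 1 := by rw [Finset.card_erase_of_mem hi]
    have := Es_card_sub_one x (s := s.erase i) (Finset.card_pos.1 (by omega))
    rwa [hc, show M - 1 - 1 = M - 2 by omega] at this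
  have h4 : ∀ i ∈ s, ∀ j ∈ s.erase i,
      (∏ l ∈ s, x l) * ∏ l ∈ (s.erase i).erase j, x l = P i * P j := by
    intro i hi j hj
    have hji : j ∈ s := Finset.mem_of_mem_erase hj
    have hij : i ∈ s.erase j := Finset.mem_erase.2 ⟨fun h => (Finset.mem_erase.1 hj).1 h.symm, hi⟩
    have e1 : x i * P i = ∏ l ∈ s, x l := Finset.mul_prod_erase s x hi
    have e2 : x j * ∏ l ∈ (s.erase i).erase j, x l = P i := Finset.mul_prod_erase _ x hj
    have e3 : x i * ∏ l ∈ (s.erase j).erase i, x l = P j := Finset.mul_prod_erase _ x hij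
    rw [← e1, ← e2, ← e3, Finset.erase_right_comm]
    ring
  have key : 2 * Es x s M * Es x s (M - 2) =
      (∑ i ∈ s, P i)^2 - ∑ i ∈ s, (P i)^2 := by
    calc 2 * Es x s M * Es x s (M - 2)
        = Es x s M * (2 * Es x s (M - 2)) := by ring
      _ = ∑ i ∈ s, Es x s M * Es x (s.erase i) (M - 2) := by
          rw [← h2, Finset.mul_sum]
      _ = ∑ i ∈ s, ∑ j ∈ s.erase i, P i * P j := by
          refine Finset.sum_congr rfl fun i hi => ?_
          rw [h3 i hi, Es_card, Finset.mul_sum]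
          exact Finset.sum_congr rfl fun j hj => h4 i hi j hj
      _ = ∑ i ∈ s, P i * ((∑ j ∈ s, P j) - P i) := by
          refine Finset.sum_congr rfl fun i hi => ?_
          rw [← Finset.mul_sum, Finset.sum_erase_eq_sub hi]
      _ = (∑ i ∈ s, P i)^2 - ∑ i ∈ s, (P i)^2 := by
          simp_rw [mul_sub, Finset.sum_sub_distrib, ← Finset.sum_mul, sq]
  have cs : (∑ i ∈ s, P i)^2 ≤ (M : ℝ) * ∑ i ∈ s, (P i)^2 := by
    have := sq_sum_le_card_mul_sum_sq (s := s) (f := P)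
    exact_mod_cast this
  rw [h1]
  nlinarith [cs, key, sq_nonneg (∑ i ∈ s, P i)]

end basic

open Polynomial in
lemma multiset_newton_top (u : Multiset ℝ) (hM : 2 ≤ Multiset.card u) :
    2 * (Multiset.card u : ℝ) * (u.esymm (Multiset.card u) * u.esymm (Multiset.card u - 2)) ≤
      ((Multiset.card u : ℝ) - 1) * (u.esymm (Multiset.card u - 1))^2 := by
  obtain ⟨l, rfl⟩ : ∃ l : List ℝ, (l : Multiset ℝ) = u := ⟨u.toList, u.coe_toList⟩
  have huniv : (Finset.univ.val.map l.get : Multiset ℝ) = (l : Multiset ℝ) := by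
    rw [Fin.univ_val_map]
    exact congrArg _ (List.ofFn_get l)
  have hesymm : ∀ k, (l : Multiset ℝ).esymm k = Es l.get Finset.univ k := by
    intro k
    rw [← huniv, Finset.esymm_map_val]
    rfl
  have hcard : Multiset.card (l : Multiset ℝ) = (Finset.univ : Finset (Fin l.length)).card := by
    simp
  simp only [hesymm, hcard] at *
  exact Es_newton_top l.get hM

open Polynomial in
lemma iterate_derivative_real_roots (f : ℝ[X]) (hf : Multiset.card f.roots = f.natDegree)
    (d : ℕ) (hd : d ≤ f.natDegree) :
    (derivative^[d] f).natDegree = f.natDegree - d ∧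
      Multiset.card (derivative^[d] f).roots = f.natDegree - d := by
  induction d with
  | zero => simp [hf]
  | succ e ih =>
    obtain ⟨h1, h2⟩ := ih (by omega)
    set g := derivative^[e] f with hg
    have hgD : g.natDegree = f.natDegree - e := h1
    have hDpos : g.natDegree ≠ 0 := by omega
    rw [Function.iterate_succ_apply', ← hg]
    constructor
    · have hub : (derivative g).natDegree < g.natDegree := natDegree_derivative_lt hDpos
      have hlb : f.natDegree - e - 1 ≤ Multiset.card (derivative g).roots := by
        have := g.card_roots_le_derivative
        omega
      have := (derivative g).card_roots'
      omega
    · have hub : (derivative g).natDegree < g.natDegree := natDegree_derivative_lt hDpos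
      have hlb : f.natDegree - e - 1 ≤ Multiset.card (derivative g).roots := by
        have := g.card_roots_le_derivative
        omega
      have := (derivative g).card_roots'
      omega

open Polynomial in
lemma Es_newton {ι : Type*} [DecidableEq ι] (x : ι → ℝ) {s : Finset ι} {j d : ℕ}
    (hj : 1 ≤ j) (hd : s.card = j + 1 + d) :
    ((j:ℝ)+1) * ((d:ℝ)+2) * (Es x s (j+1) * Es x s (j-1)) ≤
      (j:ℝ) * ((d:ℝ)+1) * (Es x s j)^2 := by
  set m := s.card with hm
  set f : ℝ[X] := ∏ i ∈ s, (X + C (x i)) with hf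
  have hmonic : f.Monic := monic_prod_of_monic s _ fun i _ => monic_X_add_C (x i)
  have hdeg : f.natDegree = m := by
    rw [hf, natDegree_prod_of_monic _ _ (fun i _ => monic_X_add_C (x i))]
    simp [hm]
  have hcoeff : ∀ k, k ≤ m → f.coeff k = Es x s (m - k) := by
    intro k hk
    rw [hf, Finset.prod_X_add_C_coeff s x hk]
    rfl
  have hroots : Multiset.card f.roots = m := by
    have hrw : f = ((s.val.map (fun i => -x i)).map (fun a => X - C a)).prod := by
      rw [hf, Multiset.map_map, Finset.prod]
      congr 1
      refine Multiset.map_congr rfl fun i _ => ?_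
      simp [sub_neg_eq_add]
    rw [hrw, roots_multiset_prod_X_sub_C]
    simp [hm]
  set g := derivative^[d] f with hg
  obtain ⟨hgdeg, hgroots⟩ :=
    iterate_derivative_real_roots f (hroots.trans hdeg.symm) d (by omega)
  rw [hdeg] at hgdeg hgroots
  have hgdeg' : g.natDegree = j + 1 := by rw [← hg] at hgdeg; omega
  have hgroots' : Multiset.card g.roots = j + 1 := by rw [← hg] at hgroots; omega
  have hgc : ∀ i, g.coeff i = (((i + d).descFactorial d : ℕ) : ℝ) * f.coeff (i + d) := by
    intro i
    rw [hg, coeff_iterate_derivative, nsmul_eq_mul]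
  -- Vieta expressions for low coefficients of g
  have hrdeg : Multiset.card g.roots = g.natDegree := by rw [hgroots', hgdeg']
  have E0 : g.coeff 0 = g.leadingCoeff * (-1)^(j+1) * g.roots.esymm (j+1) := by
    have := Polynomial.coeff_eq_esymm_roots_of_card hrdeg (k := 0) (by omega)
    rwa [hgdeg', Nat.sub_zero] at this
  have E1 : g.coeff 1 = g.leadingCoeff * (-1)^j * g.roots.esymm j := by
    have := Polynomial.coeff_eq_esymm_roots_of_card hrdeg (k := 1) (by omega)
    rwa [hgdeg', Nat.add_sub_cancel] at this
  have E2 : g.coeff 2 = g.leadingCoeff * (-1)^(j-1) * g.roots.esymm (j-1) := by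
    have := Polynomial.coeff_eq_esymm_roots_of_card hrdeg (k := 2) (by omega)
    rwa [hgdeg', show j + 1 - 2 = j - 1 by omega] at this
  -- top Newton for roots of g
  have NT := multiset_newton_top g.roots (by omega)
  rw [hgroots', show j + 1 - 2 = j - 1 by omega, Nat.add_sub_cancel] at NT
  have NT' : 2*((j:ℝ)+1)*(g.roots.esymm (j+1) * g.roots.esymm (j-1)) ≤
      (j:ℝ)*(g.roots.esymm j)^2 := by
    push_cast at NT
    nlinarith [NT]
  set lc := g.leadingCoeff with hlc
  have sign1 : (-1:ℝ)^(j+1) * (-1:ℝ)^(j-1) = 1 := by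
    rw [← pow_add, show j+1 + (j-1) = 2*j by omega, pow_mul, neg_one_sq, one_pow]
  have sign2 : ((-1:ℝ)^j)^2 = 1 := by
    rw [← pow_mul, mul_comm j 2, pow_mul, neg_one_sq, one_pow]
  have G : 2*((j:ℝ)+1)*(g.coeff 0 * g.coeff 2) ≤ (j:ℝ)*(g.coeff 1)^2 := by
    rw [E0, E1, E2]
    have eq1 : 2*((j:ℝ)+1)*((lc*(-1)^(j+1)*g.roots.esymm (j+1))*(lc*(-1)^(j-1)*g.roots.esymm (j-1)))
        = lc^2*(2*((j:ℝ)+1)*(g.roots.esymm (j+1) * g.roots.esymm (j-1))) := by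
      linear_combination (2*((j:ℝ)+1)*lc^2*(g.roots.esymm (j+1))*(g.roots.esymm (j-1))) * sign1
    have eq2 : (j:ℝ)*(lc*(-1)^j*g.roots.esymm j)^2 = lc^2*((j:ℝ)*(g.roots.esymm j)^2) := by
      linear_combination ((j:ℝ)*lc^2*(g.roots.esymm j)^2) * sign2
    rw [eq1, eq2]
    exact mul_le_mul_of_nonneg_left NT' (sq_nonneg lc)
  -- coefficient expressions via f
  have F0 := hgc 0
  rw [hcoeff (0 + d) (by omega), show m - (0 + d) = j + 1 by omega, Nat.zero_add] at F0
  have F1 := hgc 1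
  rw [hcoeff (1 + d) (by omega), show m - (1 + d) = j by omega] at F1
  have F2 := hgc 2
  rw [hcoeff (2 + d) (by omega), show m - (2 + d) = j - 1 by omega] at F2
  rw [F0, F1, F2] at G
  -- descFactorial identities
  have nat1 : (1+d).descFactorial d = (d+1) * d.descFactorial d := by
    have e1 : (d+1).descFactorial (d+1) = (d+1).descFactorial d := by
      rw [Nat.descFactorial_succ]; simp
    rw [add_comm 1 d, ← e1, Nat.descFactorial_self, Nat.descFactorial_self, Nat.factorial_succ]
  have nat2 : 2 * ((2+d).descFactorial d) = (d+2) * ((d+1) * d.descFactorial d) := by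
    have e2a : (d+2).descFactorial (d+2) = (d+2).descFactorial (d+1) := by
      rw [Nat.descFactorial_succ]; simp
    have e2b : (d+2).descFactorial (d+1) = 2 * (d+2).descFactorial d := by
      rw [Nat.descFactorial_succ, show d+2-d = 2 by omega]
    rw [add_comm 2 d, ← e2b, ← e2a, Nat.descFactorial_self, Nat.factorial_succ,
      Nat.factorial_succ, Nat.descFactorial_self]
  set D := ((d.descFactorial d : ℕ) : ℝ) with hD
  have hdf : 0 < d.descFactorial d := by
    rw [Nat.descFactorial_self]; exact Nat.factorial_pos d
  have hDpos : (0:ℝ) < D := by rw [hD]; exact_mod_cast hdf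
  have h1 : (((1+d).descFactorial d : ℕ) : ℝ) = ((d:ℝ)+1) * D := by
    rw [hD]; exact_mod_cast congrArg (Nat.cast : ℕ → ℝ) nat1
  have h2 : 2 * (((2+d).descFactorial d : ℕ) : ℝ) = ((d:ℝ)+2)*(((d:ℝ)+1)*D) := by
    rw [hD]
    have := congrArg (Nat.cast : ℕ → ℝ) nat2
    push_cast at this ⊢
    linarith [this]
  refine le_of_mul_le_mul_right ?_ (show (0:ℝ) < ((d:ℝ)+1) * D^2 by positivity)
  calc ((j:ℝ)+1) * ((d:ℝ)+2) * (Es x s (j+1) * Es x s (j-1)) * (((d:ℝ)+1) * D^2)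
      = 2*((j:ℝ)+1)*((D * Es x s (j+1)) * ((((2+d).descFactorial d : ℕ) : ℝ) * Es x s (j-1))) := by
        linear_combination (-(((j:ℝ)+1) * D * Es x s (j+1) * Es x s (j-1))) * h2
    _ ≤ (j:ℝ)*((((1+d).descFactorial d : ℕ) : ℝ) * Es x s j)^2 := G
    _ = (j:ℝ) * ((d:ℝ)+1) * (Es x s j)^2 * (((d:ℝ)+1) * D^2) := by
        rw [h1]; ring

lemma Es_chain {ι : Type*} [DecidableEq ι] (x : ι → ℝ) {s : Finset ι} {k : ℕ}
    (hk : 1 ≤ k) (hkm : k + 1 ≤ s.card)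
    (hpos : ∀ q, 1 ≤ q → q ≤ k → 0 < Es x s q) :
    ((s.card : ℝ) * (s.card.choose k : ℝ)) * Es x s (k+1) ≤
      ((s.card.choose (k+1) : ℝ)) * (Es x s 1 * Es x s k) := by
  induction k, hk using Nat.le_induction with
  | base =>
    obtain ⟨d, hd⟩ : ∃ d, s.card = 1 + 1 + d := ⟨s.card - 2, by omega⟩
    norm_num
    set E1 := Es x s 1 with hE1
    set E2 := Es x s 2 with hE2
    have N : ((1:ℝ)+1) * ((d:ℝ)+2) * (E2 * Es x s 0) ≤ 1 * ((d:ℝ)+1) * E1^2 := by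
      exact_mod_cast Es_newton x (j := 1) (d := d) le_rfl hd
    rw [Es_zero, mul_one] at N
    have hMr : (s.card : ℝ) = (d:ℝ) + 2 := by rw [hd]; push_cast; ring
    have id1 : (s.card.choose 2 : ℝ) * 2 = ((d:ℝ)+2) * ((d:ℝ)+1) := by
      have h := Nat.choose_succ_right_eq s.card 1
      norm_num at h
      have h2 : s.card - 1 = d + 1 := by omega
      rw [h2] at h
      have hc := congrArg (Nat.cast : ℕ → ℝ) h
      push_cast at hc
      rw [hMr] at hc
      linarith [hc]
    have id1' : (s.card.choose 2 : ℝ) * 2 * E1^2 = ((d:ℝ)+2) * ((d:ℝ)+1) * E1^2 := by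
      rw [id1]
    have N2 : ((d:ℝ)+2) * (((1:ℝ)+1) * ((d:ℝ)+2) * E2) ≤ ((d:ℝ)+2) * (1 * ((d:ℝ)+1) * E1^2) :=
      mul_le_mul_of_nonneg_left N (by positivity)
    rw [hMr]
    have hsq : E1 * E1 = E1^2 := (sq E1).symm
    rw [hsq]
    linarith [N2, id1']
  | succ k hk1 ih =>
    have hkm1 : k + 1 ≤ s.card := by omega
    have ihh := ih hkm1 (fun q hq1 hq2 => hpos q hq1 (by omega))
    obtain ⟨d, hd⟩ : ∃ d, s.card = (k + 1) + 1 + d := ⟨s.card - k - 2, by omega⟩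
    have N : ((k:ℝ)+1+1) * ((d:ℝ)+2) * (Es x s (k+2) * Es x s k) ≤
        ((k:ℝ)+1) * ((d:ℝ)+1) * (Es x s (k+1))^2 := by
      exact_mod_cast Es_newton x (j := k+1) (d := d) (by omega) hd
    set K := (k : ℝ)
    set D := (d : ℝ)
    set A := Es x s (k+2) with hA
    set B := Es x s (k+1) with hB
    set Ck := Es x s k with hCk
    set E1 := Es x s 1 with hE1
    set c1 := (s.card.choose k : ℝ) with hc1
    set c2 := (s.card.choose (k+1) : ℝ) with hc2
    set c3 := (s.card.choose (k+2) : ℝ) with hc3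
    have hMr : (s.card : ℝ) = K + 2 + D := by rw [hd]; push_cast; ring
    have hc2nn : (0:ℝ) ≤ c2 := by rw [hc2]; positivity
    have hBpos : 0 < B := hpos (k+1) (by omega) le_rfl
    have hCkpos : 0 < Ck := hpos k (by omega) (by omega)
    have hE1pos : 0 < E1 := hpos 1 le_rfl (by omega)
    have IH' : (K + 2 + D) * c1 * B ≤ c2 * (E1 * Ck) := by
      rw [← hMr]; exact ihh
    have id1 : (K+1) * c2 = (D+2) * c1 := by
      have h := Nat.choose_succ_right_eq s.card k
      have h2 : s.card - k = d + 2 := by omega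
      rw [h2] at h
      have := congrArg (Nat.cast : ℕ → ℝ) h
      push_cast at this
      rw [← hc1, ← hc2] at this
      linarith [this]
    have id2 : (K+2) * c3 = (D+1) * c2 := by
      have h := Nat.choose_succ_right_eq s.card (k+1)
      have h2 : s.card - (k+1) = d + 1 := by omega
      rw [h2] at h
      have := congrArg (Nat.cast : ℕ → ℝ) h
      push_cast at this
      rw [← hc2, ← hc3] at this
      linarith [this]
    have T1 : ((K+1)*(D+2)*Ck) * ((K+2+D)*c2*(K+2)*A) ≤
        ((K+1)*(D+2)*Ck) * ((D+1)*c2*(E1*B)) := by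
      calc ((K+1)*(D+2)*Ck) * ((K+2+D)*c2*(K+2)*A)
          = ((K+1)*((K+2+D)*c2)) * ((K+1+1)*(D+2)*(A*Ck)) := by ring
        _ ≤ ((K+1)*((K+2+D)*c2)) * ((K+1)*(D+1)*B^2) := by
            apply mul_le_mul_of_nonneg_left N
            positivity
        _ = ((K+1)*(D+1)*(D+2)*B) * ((K+2+D)*c1*B) := by
            linear_combination ((K+1)*(D+1)*(K+2+D)*B^2) * id1
        _ ≤ ((K+1)*(D+1)*(D+2)*B) * (c2*(E1*Ck)) := by
            apply mul_le_mul_of_nonneg_left IH'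
            positivity
        _ = ((K+1)*(D+2)*Ck) * ((D+1)*c2*(E1*B)) := by ring
    have T2 : (K+2+D)*c2*(K+2)*A ≤ (D+1)*c2*(E1*B) :=
      le_of_mul_le_mul_left T1 (by positivity)
    have T3 : (K+2)*((K+2+D)*c2*A) ≤ (K+2)*(c3*(E1*B)) := by
      calc (K+2)*((K+2+D)*c2*A) = (K+2+D)*c2*(K+2)*A := by ring
        _ ≤ (D+1)*c2*(E1*B) := T2
        _ = (K+2)*(c3*(E1*B)) := by linear_combination (-(E1*B))*id2
    have T4 : (K+2+D)*c2*A ≤ c3*(E1*B) :=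
      le_of_mul_le_mul_left T3 (by positivity)
    rw [hMr]
    calc (K+2+D) * c2 * A ≤ c3*(E1*B) := T4
      _ = c3 * (E1 * B) := by ring

lemma Es_erase_pos {ι : Type*} [DecidableEq ι] {x : ι → ℝ} {s : Finset ι} {a : ι} (ha : a ∈ s)
    (hmin : ∀ i ∈ s, x a ≤ x i) {p : ℕ} (hps : p ≤ s.card)
    (hpos : ∀ q, 1 ≤ q → q ≤ p → 0 < Es x s q) :
    ∀ q, q + 1 ≤ p → 0 < Es x (s.erase a) q := by
  intro q
  induction q with
  | zero => intro _; rw [Es_zero]; norm_num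
  | succ q IH =>
    intro hq2
    have hIH : 0 < Es x (s.erase a) q := IH (by omega)
    have hrec : Es x s (q+1) = Es x (s.erase a) (q+1) + x a * Es x (s.erase a) q := by
      have h := Es_insert x (Finset.notMem_erase a s) q
      rwa [Finset.insert_erase ha] at h
    rcases le_or_gt (x a) 0 with hxa | hxa
    · have h1 : 0 < Es x s (q+1) := hpos (q+1) (by omega) (by omega)
      have h2 : x a * Es x (s.erase a) q ≤ 0 :=
        mul_nonpos_of_nonpos_of_nonneg hxa hIH.le
      linarith [hrec]
    · refine Es_pos x (fun i hi => lt_of_lt_of_le hxa (hmin i (Finset.mem_of_mem_erase hi))) ?_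
      rw [Finset.card_erase_of_mem ha]
      omega




/-- The `p`-th elementary symmetric polynomial of `μ : Fin n → ℝ`. -/
noncomputable def esymm (n p : ℕ) (μ : Fin n → ℝ) : ℝ :=
  ∑ t ∈ Finset.powersetCard p Finset.univ, ∏ i ∈ t, μ i

/-- The `p`-th Gårding cone in `ℝⁿ`. -/
def gardingCone (n p : ℕ) : Set (Fin n → ℝ) :=
  {μ | ∀ q, 1 ≤ q → q ≤ p → 0 < esymm n q μ}

theorem stmt_3 (n p : ℕ) (hn : 2 ≤ n) (hp : 2 ≤ p) (hpn : p ≤ n)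
    (μ : Fin n → ℝ) (hμ : μ ∈ gardingCone n p) (hmono : Monotone μ) :
    (-(((n - p : ℕ) : ℝ) / ((p : ℝ) * ((n : ℝ) - 1))) *
        ∑ j ∈ Finset.univ.erase (⟨0, by omega⟩ : Fin n), μ j < μ ⟨0, by omega⟩)
    ∧ (-(((n - p : ℕ) : ℝ) / (p : ℝ)) * μ ⟨n - 1, by omega⟩ < μ ⟨0, by omega⟩) := by
  have hnR : (2:ℝ) ≤ (n:ℝ) := by exact_mod_cast hn
  have hpR : (0:ℝ) < (p:ℝ) := by exact_mod_cast (by omega : 0 < p)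
  set i0 : Fin n := ⟨0, by omega⟩ with hi0
  set iN : Fin n := ⟨n-1, by omega⟩ with hiN
  set s0 : Finset (Fin n) := Finset.univ.erase i0 with hs0
  have hcard : s0.card = n - 1 := by
    rw [hs0, Finset.card_erase_of_mem (Finset.mem_univ _), Finset.card_univ, Fintype.card_fin]
  have hmin : ∀ i ∈ (Finset.univ : Finset (Fin n)), μ i0 ≤ μ i := fun i _ =>
    hmono (by rw [Fin.le_def]; exact Nat.zero_le _)
  have hpos : ∀ q, 1 ≤ q → q ≤ p → 0 < Es μ Finset.univ q := fun q h1 h2 => hμ q h1 h2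
  have huc : (Finset.univ : Finset (Fin n)).card = n := by
    rw [Finset.card_univ, Fintype.card_fin]
  have P : ∀ q, q + 1 ≤ p → 0 < Es μ s0 q :=
    Es_erase_pos (Finset.mem_univ i0) hmin (by rw [huc]; exact hpn) hpos
  have hEp1 : 0 < Es μ s0 (p-1) := P (p-1) (by omega)
  have hSpos : 0 < Es μ s0 1 := P 1 (by omega)
  have K1 : 0 < μ i0 * Es μ s0 (p-1) + Es μ s0 p := by
    have h := Es_insert μ (Finset.notMem_erase i0 Finset.univ) (p-1)
    rw [Finset.insert_erase (Finset.mem_univ i0), show p - 1 + 1 = p by omega] at h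
    have h0 : 0 < Es μ Finset.univ p := hpos p (by omega) le_rfl
    rw [h] at h0
    linarith [h0]
  have hQpos : (0:ℝ) < (p:ℝ) * ((n:ℝ) - 1) := by
    apply mul_pos hpR; linarith
  have hRnn : (0:ℝ) ≤ ((n - p : ℕ) : ℝ) := by positivity
  have hcast : ((n - 1 : ℕ) : ℝ) = (n:ℝ) - 1 := by
    have h1 : (1:ℕ) ≤ n := by omega
    push_cast [h1]
    ring
  have Mac : ((p:ℝ) * ((n:ℝ) - 1)) * Es μ s0 p ≤
      ((n - p : ℕ) : ℝ) * (Es μ s0 1 * Es μ s0 (p-1)) := by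
    rcases eq_or_lt_of_le hpn with hpn' | hpn'
    · have hz : Es μ s0 p = 0 := Es_of_card_lt μ (by omega)
      have hz2 : ((n - p : ℕ) : ℝ) = 0 := by norm_cast; omega
      rw [hz, hz2, mul_zero, zero_mul]
    · have CH := Es_chain μ (s := s0) (k := p-1) (by omega) (by rw [hcard]; omega)
        (fun q h1 h2 => P q (by omega))
      rw [hcard, show p - 1 + 1 = p by omega] at CH
      have hcpos : (0:ℝ) < (((n-1).choose (p-1) : ℕ) : ℝ) := by
        exact_mod_cast Nat.choose_pos (by omega : p - 1 ≤ n - 1)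
      have idc : (((n-1).choose p : ℕ) : ℝ) * (p:ℝ) =
          (((n-1).choose (p-1) : ℕ) : ℝ) * ((n - p : ℕ) : ℝ) := by
        have h := Nat.choose_succ_right_eq (n-1) (p-1)
        rw [show p - 1 + 1 = p by omega, show n - 1 - (p-1) = n - p by omega] at h
        exact_mod_cast congrArg (Nat.cast : ℕ → ℝ) h
      have T : (((n-1).choose (p-1) : ℕ) : ℝ) * (((p:ℝ) * ((n:ℝ) - 1)) * Es μ s0 p) ≤
          (((n-1).choose (p-1) : ℕ) : ℝ) * (((n - p : ℕ) : ℝ) * (Es μ s0 1 * Es μ s0 (p-1))) := by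
        calc (((n-1).choose (p-1) : ℕ) : ℝ) * (((p:ℝ) * ((n:ℝ) - 1)) * Es μ s0 p)
            = (p:ℝ) * ((((n-1:ℕ):ℝ) * (((n-1).choose (p-1) : ℕ) : ℝ)) * Es μ s0 p) := by
              rw [hcast]; ring
          _ ≤ (p:ℝ) * ((((n-1).choose p : ℕ) : ℝ) * (Es μ s0 1 * Es μ s0 (p-1))) :=
              mul_le_mul_of_nonneg_left CH hpR.le
          _ = ((((n-1).choose p : ℕ) : ℝ) * (p:ℝ)) * (Es μ s0 1 * Es μ s0 (p-1)) := by ring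
          _ = ((((n-1).choose (p-1) : ℕ) : ℝ) * ((n - p : ℕ) : ℝ)) *
                (Es μ s0 1 * Es μ s0 (p-1)) := by rw [idc]
          _ = (((n-1).choose (p-1) : ℕ) : ℝ) *
                (((n - p : ℕ) : ℝ) * (Es μ s0 1 * Es μ s0 (p-1))) := by ring
      exact le_of_mul_le_mul_left T hcpos
  -- Part 1
  have key : ((-(((n - p : ℕ) : ℝ) / ((p:ℝ) * ((n:ℝ) - 1))) * Es μ s0 1)) * Es μ s0 (p-1)
      < μ i0 * Es μ s0 (p-1) := by
    have h1 : -Es μ s0 p < μ i0 * Es μ s0 (p-1) := by linarith [K1]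
    have h2 : ((-(((n - p : ℕ) : ℝ) / ((p:ℝ) * ((n:ℝ) - 1))) * Es μ s0 1)) * Es μ s0 (p-1)
        ≤ -Es μ s0 p := by
      have e : ((-(((n - p : ℕ) : ℝ) / ((p:ℝ) * ((n:ℝ) - 1))) * Es μ s0 1)) * Es μ s0 (p-1)
          = -(((n - p : ℕ) : ℝ) * (Es μ s0 1 * Es μ s0 (p-1))) / ((p:ℝ) * ((n:ℝ) - 1)) := by
        ring
      rw [e, div_le_iff₀ hQpos]
      linarith [Mac]
    linarith
  have goal1 : -(((n - p : ℕ) : ℝ) / ((p:ℝ) * ((n:ℝ) - 1))) * (∑ j ∈ s0, μ j) < μ i0 := by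
    have := lt_of_mul_lt_mul_right key hEp1.le
    rwa [← Es_one μ s0]
  -- Part 2
  have hSle : Es μ s0 1 ≤ ((n-1:ℕ):ℝ) * μ iN := by
    rw [Es_one]
    calc ∑ j ∈ s0, μ j ≤ ∑ j ∈ s0, μ iN :=
          Finset.sum_le_sum (fun j _ => hmono (by rw [Fin.le_def]; exact (by omega : (j:ℕ) ≤ n-1)))
      _ = (s0.card : ℝ) * μ iN := by rw [Finset.sum_const, nsmul_eq_mul]
      _ = ((n-1:ℕ):ℝ) * μ iN := by rw [hcard]
  have goal2le : -(((n - p : ℕ) : ℝ) / (p:ℝ)) * μ iN ≤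
      -(((n - p : ℕ) : ℝ) / ((p:ℝ) * ((n:ℝ) - 1))) * (∑ j ∈ s0, μ j) := by
    rw [neg_mul, neg_mul, neg_le_neg_iff, ← Es_one μ s0, div_mul_eq_mul_div, div_mul_eq_mul_div,
      div_le_div_iff₀ hQpos hpR]
    have h := mul_le_mul_of_nonneg_left hSle hRnn
    calc ((n - p : ℕ) : ℝ) * Es μ s0 1 * (p:ℝ)
        ≤ (((n - p : ℕ) : ℝ) * (((n-1:ℕ):ℝ) * μ iN)) * (p:ℝ) :=
          mul_le_mul_of_nonneg_right h hpR.le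
      _ = ((n - p : ℕ) : ℝ) * μ iN * ((p:ℝ) * ((n:ℝ) - 1)) := by rw [hcast]; ring
  exact ⟨goal1, lt_of_le_of_lt goal2le goal1⟩
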